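/- Let Z be a {0,1}-valued random variable, let (M_{d,z})_{d,z∈{0,1}} be {0,1}-valued potential mediators and (Y_{d,m})_{d,m∈{0,1}} integrable potential outcomes. Suppose E[M_{1,1} − M_{1,0}] ≠ 0, E[M_{0,1} − M_{0,0}] ≠ 0, and there is a constant c₁ ∈ ℝ with Y_{1,1} − Y_{1,0} = c₁ almost surely. Define α₁ := E[Y_{1,M_{1,1}} − Y_{1,M_{1,0}}]/E[M_{1,1} − M_{1,0}], β₁ := E[Y_{0,M_{0,1}} − Y_{0,M_{0,0}}]/E[M_{0,1} − M_{0,0}], α₀ := E[Y_{1,M_{1,Z}}] − α₁·E[M_{1,Z}], and β₀ := E[Y_{0,M_{0,Z}}] − β₁·E[M_{0,Z}]. Then α₀ − β₀ + (α₁ − β₁)·E[M_{0,Z}] = E[Y_{1,M_{0,Z}} − Y_{0,M_{0,Z}}]; that is, under constant effects the IV estimand NDE_0^{IV} (with the mediator held at its level under the control state) equals the natural direct effect NDE_0. -/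

import Mathlib

open MeasureTheory ProbabilityTheory

/-- Conditional mean `E[W | A] = E[W·1_A] / P(A)` (set integral divided by probability). -/
noncomputable def condMean {Ω : Type*} [MeasurableSpace Ω] (P : Measure Ω)
    (W : Ω → ℝ) (A : Set Ω) : ℝ :=
  (∫ ω in A, W ω ∂P) / (P A).toReal

/-- A `{0,1}`-valued (Bool-coded) random variable, viewed as a real number. -/
noncomputable def bR (b : Bool) : ℝ := if b then 1 else 0

/-- under a constant treated-arm mediator effect `Y_{1,1} - Y_{1,0} = c₁` a.s.
(and nonzero first stages), the IV estimand `NDE_0^{IV} = α₀ - β₀ + (α₁ - β₁)·E[M_{0,Z}]`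
equals the natural direct effect `NDE_0 = E[Y_{1,M_{0,Z}} - Y_{0,M_{0,Z}}]`. -/
theorem stmt_14 {Ω : Type*} [MeasurableSpace Ω] (P : Measure Ω) [IsProbabilityMeasure P]
    (Z : Ω → Bool) (M : Bool → Bool → Ω → Bool) (Ypo : Bool → Bool → Ω → ℝ)
    (hZ : Measurable Z) (hM : ∀ d z, Measurable (M d z))
    (hY : ∀ d m, Integrable (Ypo d m) P)
    (hden1 : (∫ ω, (bR (M true true ω) - bR (M true false ω)) ∂P) ≠ 0)
    (hden0 : (∫ ω, (bR (M false true ω) - bR (M false false ω)) ∂P) ≠ 0)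
    (c₁ : ℝ) (hc₁ : ∀ᵐ ω ∂P, Ypo true true ω - Ypo true false ω = c₁)
    (α₁ β₁ α₀ β₀ : ℝ)
    (hα₁ : α₁ = (∫ ω, (Ypo true (M true true ω) ω - Ypo true (M true false ω) ω) ∂P)
        / (∫ ω, (bR (M true true ω) - bR (M true false ω)) ∂P))
    (hβ₁ : β₁ = (∫ ω, (Ypo false (M false true ω) ω - Ypo false (M false false ω) ω) ∂P)
        / (∫ ω, (bR (M false true ω) - bR (M false false ω)) ∂P))
    (hα₀ : α₀ = (∫ ω, Ypo true (M true (Z ω) ω) ω ∂P)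
        - α₁ * ∫ ω, bR (M true (Z ω) ω) ∂P)
    (hβ₀ : β₀ = (∫ ω, Ypo false (M false (Z ω) ω) ω ∂P)
        - β₁ * ∫ ω, bR (M false (Z ω) ω) ∂P) :
    α₀ - β₀ + (α₁ - β₁) * ∫ ω, bR (M false (Z ω) ω) ∂P
      = ∫ ω, (Ypo true (M false (Z ω) ω) ω - Ypo false (M false (Z ω) ω) ω) ∂P := by
  have hexp : ∀ (d : Bool) (N : Ω → Bool) (ω : Ω),
      Ypo d (N ω) ω = Ypo d false ω + bR (N ω) * (Ypo d true ω - Ypo d false ω) := by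
    intro d N ω; cases h : N ω <;> simp [bR] <;> ring
  have hNmeas : ∀ d : Bool, Measurable (fun ω => M d (Z ω) ω) := by
    intro d
    have h : (fun ω => M d (Z ω) ω)
        = fun ω => if Z ω = true then M d true ω else M d false ω := by
      funext ω; cases h : Z ω <;> simp [h]
    rw [h]
    exact Measurable.ite (hZ (measurableSet_singleton true)) (hM d true) (hM d false)
  have hbRint : ∀ (N : Ω → Bool), Measurable N → Integrable (fun ω => bR (N ω)) P := by
    intro N hN
    have hmeas : Measurable fun ω => bR (N ω) := (measurable_from_top (f := bR)).comp hN
    refine ⟨hmeas.aestronglyMeasurable, ?_⟩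
    apply HasFiniteIntegral.of_bounded (C := (1 : ℝ))
    filter_upwards with ω
    cases N ω <;> simp [bR]
  have hYint : ∀ (d : Bool) (N : Ω → Bool), Measurable N →
      Integrable (fun ω => Ypo d (N ω) ω) P := by
    intro d N hN
    have h : (fun ω => Ypo d (N ω) ω)
        = fun ω => Ypo d false ω + bR (N ω) * (Ypo d true ω - Ypo d false ω) :=
      funext (hexp d N)
    rw [h]
    refine (hY d false).add (((hY d true).sub (hY d false)).bdd_mul (c := 1)
      ((measurable_from_top (f := bR)).comp hN).aestronglyMeasurable (ae_of_all _ fun ω => ?_))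
    cases N ω <;> simp [bR]
  have hInt1 : ∀ (N : Ω → Bool), Measurable N →
      ∫ ω, Ypo true (N ω) ω ∂P
        = (∫ ω, Ypo true false ω ∂P) + c₁ * ∫ ω, bR (N ω) ∂P := by
    intro N hN
    have hcongr : (fun ω => Ypo true (N ω) ω)
        =ᵐ[P] fun ω => Ypo true false ω + bR (N ω) * c₁ := by
      filter_upwards [hc₁] with ω h
      rw [hexp true N ω, h]
    rw [integral_congr_ae hcongr,
      integral_add (hY true false) ((hbRint N hN).mul_const c₁), integral_mul_const]
    ring
  have hnum1 : ∫ ω, (Ypo true (M true true ω) ω - Ypo true (M true false ω) ω) ∂P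
      = c₁ * ∫ ω, (bR (M true true ω) - bR (M true false ω)) ∂P := by
    rw [integral_sub (hYint true _ (hM true true)) (hYint true _ (hM true false)),
        hInt1 _ (hM true true), hInt1 _ (hM true false),
        integral_sub (hbRint _ (hM true true)) (hbRint _ (hM true false))]
    ring
  have hα₁c : α₁ = c₁ := by
    rw [hα₁, hnum1, mul_div_assoc, div_self hden1, mul_one]
  have hRHS : ∫ ω, (Ypo true (M false (Z ω) ω) ω - Ypo false (M false (Z ω) ω) ω) ∂P
      = ((∫ ω, Ypo true false ω ∂P) + c₁ * ∫ ω, bR (M false (Z ω) ω) ∂P)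
        - ∫ ω, Ypo false (M false (Z ω) ω) ω ∂P := by
    rw [integral_sub (hYint true _ (hNmeas false)) (hYint false _ (hNmeas false)),
        hInt1 _ (hNmeas false)]
  rw [hRHS, hα₀, hβ₀, hInt1 _ (hNmeas true), hα₁c]
  ring
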